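/- arXiv:2506.18441 — 3 statements merged into one kernel-verified Lean document; each statement's English description precedes it below -/
import Mathlib

section
/- Let Ψ be a frame for a Hilbert space H with Gram matrix G_Ψ = C_Ψ D_Ψ and canonical dual frame Ψ̃. Then G_{Ψ,Ψ̃} = G_Ψ† G_Ψ and G_{Ψ̃} = (G_Ψ†)² G_Ψ, where G_Ψ† denotes the Moore–Penrose pseudo-inverse of G_Ψ on ℓ²(K). -/
open scoped InnerProductSpace ENNReal

private lemma aux_zero_of_comp_adjoint {E F : Type*} [NormedAddCommGroup E]
    [InnerProductSpace ℂ E] [CompleteSpace E] [NormedAddCommGroup F]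
    [InnerProductSpace ℂ F] [CompleteSpace F]
    (T : E →L[ℂ] F) (h : T.comp (ContinuousLinearMap.adjoint T) = 0) : T = 0 := by
  have hadj : ContinuousLinearMap.adjoint T = 0 := by
    ext x
    have h1 : ⟪(ContinuousLinearMap.adjoint T) x, (ContinuousLinearMap.adjoint T) x⟫_ℂ = 0 := by
      rw [ContinuousLinearMap.adjoint_inner_left]
      have h2 := ContinuousLinearMap.ext_iff.mp h x
      simp only [ContinuousLinearMap.comp_apply, ContinuousLinearMap.zero_apply] at h2
      rw [h2, inner_zero_right]
    simpa using inner_self_eq_zero.mp h1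
  have h0 : ContinuousLinearMap.adjoint (0 : F →L[ℂ] E) = (0 : E →L[ℂ] F) := by
    symm; rw [ContinuousLinearMap.eq_adjoint_iff]; simp
  rw [← ContinuousLinearMap.adjoint_adjoint T, hadj, h0]

-- STATEMENT 5: for a frame Ψ with Gram matrix G_Ψ = C_Ψ D_Ψ and canonical dual
-- frame Ψ̃ (with analysis/synthesis operators Ct, Dt), one has
-- G_{Ψ,Ψ̃} = G† G  and  G_{Ψ̃} = (G†)² G, where G† is the Moore–Penrose
-- pseudo-inverse of G = G_Ψ on ℓ²(K).
theorem gram_pseudoinverse_identities {K : Type*} [Countable K]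
    {H : Type*} [NormedAddCommGroup H] [InnerProductSpace ℂ H] [CompleteSpace H]
    (ψ : K → H) (A B : ℝ) (hA : 0 < A) (hB : 0 < B)
    (hsum : ∀ f : H, Summable fun k => ‖⟪ψ k, f⟫_ℂ‖ ^ 2)
    (hframe : ∀ f : H,
      A * ‖f‖ ^ 2 ≤ ∑' k, ‖⟪ψ k, f⟫_ℂ‖ ^ 2 ∧ ∑' k, ‖⟪ψ k, f⟫_ℂ‖ ^ 2 ≤ B * ‖f‖ ^ 2)
    -- analysis and synthesis operators of Ψ
    (C : H →L[ℂ] lp (fun _ : K => ℂ) 2) (D : lp (fun _ : K => ℂ) 2 →L[ℂ] H)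
    (hC : ∀ (f : H) (k : K), C f k = ⟪ψ k, f⟫_ℂ)
    (hD : ∀ c : lp (fun _ : K => ℂ) 2, HasSum (fun k => c k • ψ k) (D c))
    -- inverse frame operator, canonical dual frame ψ̃_k = S' (ψ k)
    (S' : H →L[ℂ] H)
    (hS'l : S'.comp (D.comp C) = ContinuousLinearMap.id ℂ H)
    (hS'r : (D.comp C).comp S' = ContinuousLinearMap.id ℂ H)
    -- analysis and synthesis operators of the canonical dual frame Ψ̃
    (Ct : H →L[ℂ] lp (fun _ : K => ℂ) 2) (Dt : lp (fun _ : K => ℂ) 2 →L[ℂ] H)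
    (hCt : ∀ (f : H) (k : K), Ct f k = ⟪S' (ψ k), f⟫_ℂ)
    (hDt : ∀ c : lp (fun _ : K => ℂ) 2, HasSum (fun k => c k • S' (ψ k)) (Dt c))
    -- the Moore–Penrose pseudo-inverse G† of the Gram matrix G = C D
    (Gd : lp (fun _ : K => ℂ) 2 →L[ℂ] lp (fun _ : K => ℂ) 2)
    (hGd1 : (C.comp D).comp (Gd.comp (C.comp D)) = C.comp D)
    (hGd2 : Gd.comp ((C.comp D).comp Gd) = Gd)
    (hGd3 : ContinuousLinearMap.adjoint ((C.comp D).comp Gd) = (C.comp D).comp Gd)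
    (hGd4 : ContinuousLinearMap.adjoint (Gd.comp (C.comp D)) = Gd.comp (C.comp D)) :
    -- G_{Ψ,Ψ̃} = G† G
    C.comp Dt = Gd.comp (C.comp D) ∧
    -- G_{Ψ̃} = (G†)² G
    Ct.comp Dt = Gd.comp (Gd.comp (C.comp D)) := by
  -- D is the adjoint of C
  have hDadj : D = ContinuousLinearMap.adjoint C := by
    rw [ContinuousLinearMap.eq_adjoint_iff]
    intro c f
    have h1 : HasSum (fun k => ⟪f, c k • ψ k⟫_ℂ) ⟪f, D c⟫_ℂ := (hD c).mapL (innerSL ℂ f)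
    have h2 : HasSum (fun k => ⟪c k • ψ k, f⟫_ℂ) ⟪D c, f⟫_ℂ := by
      have h := h1.star
      simp only [RCLike.star_def, inner_conj_symm] at h
      exact h
    have h3 : HasSum (fun k => ⟪c k, C f k⟫_ℂ) ⟪c, C f⟫_ℂ := lp.hasSum_inner c (C f)
    have heq : (fun k => ⟪c k • ψ k, f⟫_ℂ) = fun k => ⟪c k, C f k⟫_ℂ := by
      funext k
      rw [inner_smul_left, hC, RCLike.inner_apply, mul_comm]
    rw [heq] at h2
    exact h2.unique h3
  -- the Gram matrix G = C D is self-adjoint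
  have hGadj : ContinuousLinearMap.adjoint (C.comp D) = C.comp D := by
    rw [hDadj, ContinuousLinearMap.adjoint_comp, ContinuousLinearMap.adjoint_adjoint]
  -- pointwise versions of the frame operator inverse identities
  have hS'l' : ∀ x : H, S' (D (C x)) = x := by
    intro x
    have := ContinuousLinearMap.ext_iff.mp hS'l x
    simpa using this
  have hS'r' : ∀ x : H, D (C (S' x)) = x := by
    intro x
    have := ContinuousLinearMap.ext_iff.mp hS'r x
    simpa using this
  -- G† G ∘ G = G (adjoint of hGd1)
  have hQG : (Gd.comp (C.comp D)).comp (C.comp D) = C.comp D := by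
    have h := congrArg ContinuousLinearMap.adjoint hGd1
    rwa [ContinuousLinearMap.adjoint_comp, hGd4, hGadj] at h
  -- key step: (G† G) ∘ C = C, via T T* = 0 with T = C - (G† G) C
  have hQC : (Gd.comp (C.comp D)).comp C = C := by
    set Q := Gd.comp (C.comp D) with hQ
    set T := C - Q.comp C with hT
    have hTadj : ContinuousLinearMap.adjoint T = D - D.comp Q := by
      rw [hT, LinearIsometryEquiv.map_sub, ContinuousLinearMap.adjoint_comp, hGd4, ← hDadj]
    have hTT : T.comp (ContinuousLinearMap.adjoint T) = 0 := by
      rw [hTadj, hT]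
      have e1 : C.comp (D.comp Q) = C.comp D := by
        rw [← ContinuousLinearMap.comp_assoc]; exact hGd1
      have e2 : (Q.comp C).comp D = Q.comp (C.comp D) := ContinuousLinearMap.comp_assoc _ _ _
      have e3 : Q.comp (C.comp D) = C.comp D := hQG
      simp only [ContinuousLinearMap.comp_sub, ContinuousLinearMap.sub_comp]
      rw [e1, e2, e3]
      have e4 : (Q.comp C).comp (D.comp Q) = Q.comp (C.comp (D.comp Q)) :=
        ContinuousLinearMap.comp_assoc _ _ _
      rw [e4, e1, e3]
      abel
    have hT0 : T = 0 := aux_zero_of_comp_adjoint T hTT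
    have h' : C - Q.comp C = 0 := by rw [← hT]; exact hT0
    exact (sub_eq_zero.mp h').symm
  have hQC' : ∀ f : H, Gd (C (D (C f))) = C f := by
    intro f
    have := ContinuousLinearMap.ext_iff.mp hQC f
    simpa using this
  -- hence G† ∘ C = C ∘ S' (pointwise)
  have hGdC : ∀ x : H, Gd (C x) = C (S' x) := by
    intro x
    have h := hQC' (S' x)
    rwa [hS'r'] at h
  -- S' is self-adjoint
  have hDCadj : ContinuousLinearMap.adjoint (D.comp C) = D.comp C := by
    rw [hDadj, ContinuousLinearMap.adjoint_comp, ContinuousLinearMap.adjoint_adjoint]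
  have hS'adj : ContinuousLinearMap.adjoint S' = S' := by
    have h := congrArg ContinuousLinearMap.adjoint hS'r
    rw [ContinuousLinearMap.adjoint_comp, hDCadj, ContinuousLinearMap.adjoint_id] at h
    -- h : (adjoint S').comp (D.comp C) = id
    calc ContinuousLinearMap.adjoint S'
        = (ContinuousLinearMap.adjoint S').comp ((D.comp C).comp S') := by
          rw [hS'r, ContinuousLinearMap.comp_id]
      _ = ((ContinuousLinearMap.adjoint S').comp (D.comp C)).comp S' :=
          (ContinuousLinearMap.comp_assoc _ _ _).symm
      _ = S' := by rw [h, ContinuousLinearMap.id_comp]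
  -- Dt = S' ∘ D and Ct = C ∘ S' (pointwise)
  have hDt' : ∀ c : lp (fun _ : K => ℂ) 2, Dt c = S' (D c) := by
    intro c
    refine (hDt c).unique ?_
    have := (hD c).mapL S'
    simpa using this
  have hCt' : ∀ f : H, Ct f = C (S' f) := by
    intro f
    apply lp.ext
    funext k
    show Ct f k = C (S' f) k
    rw [hCt, hC]
    conv_lhs => rw [← hS'adj]
    rw [ContinuousLinearMap.adjoint_inner_left]
  exact ⟨by ext1 c; rw [ContinuousLinearMap.comp_apply, hDt', ← hGdC]; rfl, by
    ext1 c
    rw [ContinuousLinearMap.comp_apply, hDt', hCt']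
    have : Gd (Gd (C (D c))) = C (S' (S' (D c))) := by
      rw [hGdC (D c), hGdC (S' (D c))]
    simpa using this.symm⟩
end

section
/- Let A be a Banach *-algebra of matrices over an index set K such that (ARI1) every A ∈ 𝒜 acts boundedly on ℓ^p_w(K) for all 1 ≤ p ≤ ∞ and all weights w in an admissible class W containing the constant weight and closed under w ↦ 1/w, and (ARI2) 𝒜 is inverse-closed in B(ℓ²(K)). Let μ ∈ W and let B be a matrix such that B^μ := D_μ B D_{1/μ} ∈ 𝒜 and B is invertible on ℓ²_μ(K). Then for every 1 ≤ p ≤ ∞ and every w ∈ W, the operator B is bounded and invertible on ℓ^p_{μw}(K), with inverse D_{1/μ}(B^μ)^{-1}D_μ. -/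
open scoped ENNReal NNReal

-- The weighted `ℓ^p_w`-norm (with values in `ℝ≥0∞`), for `1 ≤ p ≤ ∞`.
noncomputable def wnorm {K : Type*} (p : ℝ≥0∞) (w : K → ℝ) (c : K → ℂ) : ℝ≥0∞ :=
  if p = ∞ then ⨆ k, ((‖c k‖₊ * ‖w k‖₊ : ℝ≥0) : ℝ≥0∞)
  else (∑' k, ((‖c k‖₊ * ‖w k‖₊ : ℝ≥0) : ℝ≥0∞) ^ p.toReal) ^ (1 / p.toReal)

-- The diagonal operator `D_μ`.
def diagOp {K : Type*} (μ : K → ℝ) : (K → ℂ) →ₗ[ℂ] (K → ℂ) where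
  toFun c := fun k => (μ k : ℂ) * c k
  map_add' c d := by funext k; simp [mul_add]
  map_smul' a c := by funext k; simp [smul_eq_mul]; ring


lemma wnorm_congr_w {K : Type*} (p : ℝ≥0∞) {w w' : K → ℝ} (h : ∀ k, w k = w' k)
    (c : K → ℂ) : wnorm p w c = wnorm p w' c := by
  unfold wnorm; simp_rw [h]

lemma wnorm_diagOp {K : Type*} (p : ℝ≥0∞) (μ w : K → ℝ) (c : K → ℂ) :
    wnorm p w (diagOp μ c) = wnorm p (fun k => μ k * w k) c := by
  have h : ∀ k, (‖(diagOp μ c) k‖₊ * ‖w k‖₊ : ℝ≥0)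
      = ‖c k‖₊ * ‖μ k * w k‖₊ := by
    intro k
    show ‖(μ k : ℂ) * c k‖₊ * ‖w k‖₊ = ‖c k‖₊ * ‖μ k * w k‖₊
    simp [nnnorm_mul]
    ring
  unfold wnorm
  split_ifs
  · simp_rw [h]
  · simp_rw [h]

lemma diag_inv_comp {K : Type*} {μ : K → ℝ} (hμ : ∀ k, μ k ≠ 0) :
    (diagOp fun k => (μ k)⁻¹) ∘ₗ diagOp μ = LinearMap.id := by
  refine LinearMap.ext fun c => funext fun k => ?_
  show (((μ k)⁻¹ : ℝ) : ℂ) * ((μ k : ℂ) * c k) = c k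
  rw [← mul_assoc, ← Complex.ofReal_mul, inv_mul_cancel₀ (hμ k)]
  simp

lemma diag_comp_inv {K : Type*} {μ : K → ℝ} (hμ : ∀ k, μ k ≠ 0) :
    diagOp μ ∘ₗ (diagOp fun k => (μ k)⁻¹) = LinearMap.id := by
  refine LinearMap.ext fun c => funext fun k => ?_
  show (μ k : ℂ) * (((μ k)⁻¹ : ℝ) * c k) = c k
  rw [← mul_assoc, ← Complex.ofReal_mul, mul_inv_cancel₀ (hμ k)]
  simp

-- STATEMENT 7: let 𝒜 be a matrix algebra satisfying (ARI1) (boundedness on all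
-- ℓ^p_w, w ∈ W, where W contains 1 and is closed under w ↦ 1/w) and (ARI2)
-- (inverse-closedness in B(ℓ²)).  If μ ∈ W, B^μ = D_μ B D_{1/μ} ∈ 𝒜 and B is
-- invertible on ℓ²_μ, then for all 1 ≤ p ≤ ∞ and w ∈ W, B is bounded and
-- invertible on ℓ^p_{μw}, with inverse D_{1/μ} (B^μ)⁻¹ D_μ.
theorem ari_lifting_invertibility {K : Type*} [Countable K]
    (W : Set (K → ℝ)) (hWpos : ∀ w ∈ W, ∀ k, 0 < w k)
    (hW1 : (fun _ => (1 : ℝ)) ∈ W)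
    (hWinv : ∀ w ∈ W, (fun k => (w k)⁻¹) ∈ W)
    (𝒜 : Set ((K → ℂ) →ₗ[ℂ] (K → ℂ)))
    (h𝒜mul : ∀ A ∈ 𝒜, ∀ A' ∈ 𝒜, A ∘ₗ A' ∈ 𝒜)
    -- (ARI1) every A ∈ 𝒜 acts boundedly on ℓ^p_w for all 1 ≤ p ≤ ∞, w ∈ W
    (hARI1 : ∀ A ∈ 𝒜, ∀ p : ℝ≥0∞, 1 ≤ p → ∀ w ∈ W,
      ∃ Cb : ℝ≥0, ∀ c : K → ℂ, wnorm p w (A c) ≤ Cb * wnorm p w c)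
    -- (ARI2) 𝒜 is inverse-closed in B(ℓ²(K))
    (hARI2 : ∀ A ∈ 𝒜, ∀ A' : (K → ℂ) →ₗ[ℂ] (K → ℂ),
      A ∘ₗ A' = LinearMap.id → A' ∘ₗ A = LinearMap.id →
      (∃ Cb : ℝ≥0, ∀ c : K → ℂ,
        wnorm 2 (fun _ => 1) (A' c) ≤ Cb * wnorm 2 (fun _ => 1) c) →
      A' ∈ 𝒜)
    (μ : K → ℝ) (hμW : μ ∈ W)
    (B Binv : (K → ℂ) →ₗ[ℂ] (K → ℂ))
    -- B^μ := D_μ B D_{1/μ} ∈ 𝒜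
    (hBμ : (diagOp μ) ∘ₗ B ∘ₗ (diagOp fun k => (μ k)⁻¹) ∈ 𝒜)
    -- B is invertible on ℓ²_μ (with inverse Binv, both bounded in the ℓ²_μ norm)
    (hBl : B ∘ₗ Binv = LinearMap.id) (hBr : Binv ∘ₗ B = LinearMap.id)
    (hBbd : ∃ Cb : ℝ≥0, ∀ c : K → ℂ, wnorm 2 μ (B c) ≤ Cb * wnorm 2 μ c)
    (hBinvbd : ∃ Cb : ℝ≥0, ∀ c : K → ℂ, wnorm 2 μ (Binv c) ≤ Cb * wnorm 2 μ c) :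
    ∀ p : ℝ≥0∞, 1 ≤ p → ∀ w ∈ W,
      -- B is bounded on ℓ^p_{μw}
      (∃ Cb : ℝ≥0, ∀ c : K → ℂ,
        wnorm p (fun k => μ k * w k) (B c) ≤ Cb * wnorm p (fun k => μ k * w k) c) ∧
      -- the operator D_{1/μ} (B^μ)⁻¹ D_μ is a two-sided inverse of B ...
      (B ∘ₗ ((diagOp fun k => (μ k)⁻¹) ∘ₗ
          ((diagOp μ) ∘ₗ Binv ∘ₗ (diagOp fun k => (μ k)⁻¹)) ∘ₗ (diagOp μ))
        = LinearMap.id ∧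
       ((diagOp fun k => (μ k)⁻¹) ∘ₗ
          ((diagOp μ) ∘ₗ Binv ∘ₗ (diagOp fun k => (μ k)⁻¹)) ∘ₗ (diagOp μ)) ∘ₗ B
        = LinearMap.id) ∧
      -- ... which is also bounded on ℓ^p_{μw}
      (∃ Cb : ℝ≥0, ∀ c : K → ℂ,
        wnorm p (fun k => μ k * w k)
            (((diagOp fun k => (μ k)⁻¹) ∘ₗ
              ((diagOp μ) ∘ₗ Binv ∘ₗ (diagOp fun k => (μ k)⁻¹)) ∘ₗ (diagOp μ)) c)
          ≤ Cb * wnorm p (fun k => μ k * w k) c) := by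

  intro p hp w hw
  have hμ : ∀ k, μ k ≠ 0 := fun k => (hWpos μ hμW k).ne'
  set Dμ := diagOp μ
  set Dinv := diagOp fun k => (μ k)⁻¹ with hDinv
  have hii : Dinv ∘ₗ Dμ = LinearMap.id := diag_inv_comp hμ
  have hii' : Dμ ∘ₗ Dinv = LinearMap.id := diag_comp_inv hμ
  set Bμ := Dμ ∘ₗ B ∘ₗ Dinv with hBμdef
  set Aμ := Dμ ∘ₗ Binv ∘ₗ Dinv with hAμdef
  -- the "inverse" operator simplifies to Binv
  have hsimp : Dinv ∘ₗ (Dμ ∘ₗ Binv ∘ₗ Dinv) ∘ₗ Dμ = Binv := by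
    have : Dinv ∘ₗ (Dμ ∘ₗ Binv ∘ₗ Dinv) ∘ₗ Dμ
        = (Dinv ∘ₗ Dμ) ∘ₗ Binv ∘ₗ (Dinv ∘ₗ Dμ) := by
      simp only [LinearMap.comp_assoc]
    rw [this, hii]; simp
  -- conjugation identities for wnorm
  have hμw : ∀ (q : ℝ≥0∞) (c : K → ℂ),
      wnorm q (fun k => μ k * w k) c = wnorm q w (Dμ c) := by
    intro q c; rw [wnorm_diagOp]
  have hμ1 : ∀ c : K → ℂ, wnorm 2 μ c = wnorm 2 (fun _ => (1:ℝ)) (Dμ c) := by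
    intro c; rw [wnorm_diagOp]
    exact wnorm_congr_w 2 (fun k => (mul_one (μ k)).symm) c
  have hinv1 : ∀ c : K → ℂ,
      wnorm 2 μ (Dinv c) = wnorm 2 (fun _ => (1:ℝ)) c := by
    intro c; rw [wnorm_diagOp]
    exact wnorm_congr_w 2 (fun k => inv_mul_cancel₀ (hμ k)) c
  -- Bμ ∘ Aμ = id and Aμ ∘ Bμ = id
  have hBA : Bμ ∘ₗ Aμ = LinearMap.id := by
    have : Bμ ∘ₗ Aμ = Dμ ∘ₗ (B ∘ₗ ((Dinv ∘ₗ Dμ) ∘ₗ Binv)) ∘ₗ Dinv := by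
      simp only [hBμdef, hAμdef, LinearMap.comp_assoc]
    rw [this, hii]
    simp only [LinearMap.id_comp, hBl]
    simpa using hii'
  have hAB : Aμ ∘ₗ Bμ = LinearMap.id := by
    have : Aμ ∘ₗ Bμ = Dμ ∘ₗ (Binv ∘ₗ ((Dinv ∘ₗ Dμ) ∘ₗ B)) ∘ₗ Dinv := by
      simp only [hBμdef, hAμdef, LinearMap.comp_assoc]
    rw [this, hii]
    simp only [LinearMap.id_comp, hBr]
    simpa using hii'
  -- Aμ is bounded on ℓ²(weight 1)
  have hAμbd : ∃ Cb : ℝ≥0, ∀ c : K → ℂ,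
      wnorm 2 (fun _ => (1:ℝ)) (Aμ c) ≤ Cb * wnorm 2 (fun _ => (1:ℝ)) c := by
    obtain ⟨Cb, hCb⟩ := hBinvbd
    refine ⟨Cb, fun c => ?_⟩
    have h1 : wnorm 2 (fun _ => (1:ℝ)) (Aμ c)
        = wnorm 2 μ (Binv (Dinv c)) := by
      rw [hμ1 (Binv (Dinv c))]; rfl
    rw [h1, ← hinv1 c]
    exact hCb (Dinv c)
  have hAμ𝒜 : Aμ ∈ 𝒜 := hARI2 Bμ hBμ Aμ hBA hAB hAμbd
  -- boundedness of B on ℓ^p_{μw}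
  obtain ⟨C1, hC1⟩ := hARI1 Bμ hBμ p hp w hw
  obtain ⟨C2, hC2⟩ := hARI1 Aμ hAμ𝒜 p hp w hw
  have hDB : ∀ c : K → ℂ, Dμ (B c) = Bμ (Dμ c) := by
    intro c
    have : Bμ ∘ₗ Dμ = Dμ ∘ₗ B := by
      have : Bμ ∘ₗ Dμ = Dμ ∘ₗ B ∘ₗ (Dinv ∘ₗ Dμ) := by
        simp only [hBμdef, LinearMap.comp_assoc]
      rw [this, hii]; simp
    exact (congrArg (fun f => f c) this).symm
  have hDBinv : ∀ c : K → ℂ, Dμ (Binv c) = Aμ (Dμ c) := by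
    intro c
    have : Aμ ∘ₗ Dμ = Dμ ∘ₗ Binv := by
      have : Aμ ∘ₗ Dμ = Dμ ∘ₗ Binv ∘ₗ (Dinv ∘ₗ Dμ) := by
        simp only [hAμdef, LinearMap.comp_assoc]
      rw [this, hii]; simp
    exact (congrArg (fun f => f c) this).symm
  refine ⟨⟨C1, fun c => ?_⟩, ⟨?_, ?_⟩, ⟨C2, fun c => ?_⟩⟩
  · rw [hμw p (B c), hDB c, hμw p c]
    exact hC1 (Dμ c)
  · rw [hsimp]; exact hBl
  · rw [hsimp]; exact hBr
  · rw [show (Dinv ∘ₗ (Dμ ∘ₗ Binv ∘ₗ Dinv) ∘ₗ Dμ) c = Binv c from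
      congrArg (fun f => f c) hsimp]
    rw [hμw p (Binv c), hDBinv c, hμw p c]
    exact hC2 (Dμ c)
end

section
/- Fix s > d and let K = ℤ^d. The Jaffard class 𝒜_s of matrices A = (a_{kl}) satisfying |a_{kl}| ≤ C(1+|k−l|)^{−s} for all k, l, with norm the smallest such constant C, is a Banach algebra under matrix multiplication: if A, B ∈ 𝒜_s then AB ∈ 𝒜_s with ‖AB‖_{𝒜_s} ≤ C_s ‖A‖_{𝒜_s}‖B‖_{𝒜_s} for a constant C_s depending only on s and d. -/
-- Euclidean norm on ℤ^d.
noncomputable def znorm {d : ℕ} (k : Fin d → ℤ) : ℝ :=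
  Real.sqrt (∑ i, ((k i : ℝ)) ^ 2)

open Real

noncomputable def zmap {d : ℕ} (k : Fin d → ℤ) : EuclideanSpace ℝ (Fin d) :=
  WithLp.toLp 2 (fun i => (k i : ℝ))

lemma znorm_eq_norm {d : ℕ} (k : Fin d → ℤ) : znorm k = ‖zmap k‖ := by
  simp only [EuclideanSpace.norm_eq, zmap, znorm, Real.norm_eq_abs, sq_abs, PiLp.toLp_apply]

lemma znorm_nonneg {d : ℕ} (k : Fin d → ℤ) : 0 ≤ znorm k := Real.sqrt_nonneg _

lemma znorm_triangle {d : ℕ} (k j l : Fin d → ℤ) :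
    znorm (k - l) ≤ znorm (k - j) + znorm (j - l) := by
  rw [znorm_eq_norm, znorm_eq_norm, znorm_eq_norm]
  have h : zmap (k - l) = zmap (k - j) + zmap (j - l) := by
    ext i
    simp only [zmap, Pi.sub_apply, Pi.add_apply, PiLp.add_apply, PiLp.toLp_apply]
    push_cast
    ring
  rw [h]
  exact norm_add_le _ _

lemma coord_le_znorm {d : ℕ} (k : Fin d → ℤ) (i : Fin d) : |(k i : ℝ)| ≤ znorm k := by
  rw [znorm, ← Real.sqrt_sq_eq_abs]
  apply Real.sqrt_le_sqrt
  exact Finset.single_le_sum (fun i _ => sq_nonneg ((k i : ℝ))) (Finset.mem_univ i)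

lemma summable_int_weight {t : ℝ} (ht : 1 < t) :
    Summable (fun n : ℤ => (1 + |(n : ℝ)|) ^ (-t)) := by
  have h := (Real.summable_one_div_int_add_rpow (1/2) t).2 ht
  apply Summable.of_nonneg_of_le (fun n => rpow_nonneg (by positivity) _) _ h
  intro n
  have h1 : (0 : ℝ) < |(n : ℝ) + 1/2| := by
    rcases le_or_gt 0 (n : ℝ) with h | h
    · rw [abs_of_pos (by linarith)]; linarith
    · have hn : n < 0 := by exact_mod_cast h
      have hn1 : n ≤ -1 := by omega
      have : (n : ℝ) ≤ -1 := by exact_mod_cast hn1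
      rw [abs_of_neg (by linarith)]; linarith
  have h2 : |(n : ℝ) + 1/2| ≤ 1 + |(n : ℝ)| := by
    calc |(n : ℝ) + 1/2| ≤ |(n : ℝ)| + |(1/2 : ℝ)| := abs_add_le _ _
    _ ≤ 1 + |(n : ℝ)| := by rw [abs_of_pos (by norm_num : (0:ℝ) < 1/2)]; linarith
  calc (1 + |(n : ℝ)|) ^ (-t) ≤ |(n : ℝ) + 1/2| ^ (-t) :=
        Real.rpow_le_rpow_of_nonpos h1 h2 (by linarith)
    _ = 1 / |(n : ℝ) + 1/2| ^ t := by rw [Real.rpow_neg h1.le, ← one_div]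

lemma summable_pi_prod {f : ℤ → ℝ} (hf : Summable f) (h0 : ∀ n, 0 ≤ f n) (n : ℕ) :
    Summable (fun j : Fin n → ℤ => ∏ i, f (j i)) := by
  induction n with
  | zero => exact Summable.of_finite
  | succ n ih =>
    have h := hf.mul_of_nonneg ih h0 (fun j => Finset.prod_nonneg fun i _ => h0 _)
    have h2 := h.comp_injective (Fin.consEquiv (fun _ => ℤ)).symm.injective
    apply h2.congr
    intro j
    simp only [Function.comp_apply, Fin.consEquiv_symm_apply]
    rw [Fin.prod_univ_succ]
    rfl

lemma summable_weight (d : ℕ) {s : ℝ} (hs : (d : ℝ) < s) :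
    Summable (fun j : Fin d → ℤ => (1 + znorm j) ^ (-s)) := by
  rcases Nat.eq_zero_or_pos d with hd | hd
  · subst hd; exact Summable.of_finite
  · have hd' : (0 : ℝ) < d := by exact_mod_cast hd
    set t := s / d with htdef
    have ht : 1 < t := (one_lt_div hd').2 hs
    have hf : Summable (fun n : ℤ => (1 + |(n : ℝ)|) ^ (-t)) := summable_int_weight ht
    have hprod := summable_pi_prod hf (fun n => rpow_nonneg (by positivity) _) d
    apply Summable.of_nonneg_of_le
      (fun j => rpow_nonneg (by have := znorm_nonneg j; linarith) _) _ hprod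
    intro j
    have h1 : ∀ i, (0 : ℝ) < 1 + |(j i : ℝ)| := fun i => by positivity
    have hz : 0 ≤ znorm j := znorm_nonneg j
    have hpp : (0 : ℝ) < ∏ i, (1 + |(j i : ℝ)|) := Finset.prod_pos fun i _ => h1 i
    have hmain : ∏ i, (1 + |(j i : ℝ)|) ≤ (1 + znorm j) ^ (d : ℕ) := by
      rw [show ((1 + znorm j) ^ (d : ℕ) : ℝ) = ∏ _i : Fin d, (1 + znorm j) by
        rw [Finset.prod_const, Finset.card_univ, Fintype.card_fin]]
      exact Finset.prod_le_prod (fun i _ => (h1 i).le)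
        (fun i _ => by have := coord_le_znorm j i; linarith)
    calc (1 + znorm j) ^ (-s) = ((1 + znorm j) ^ (d : ℕ) : ℝ) ^ (-t) := by
          rw [← Real.rpow_natCast (1 + znorm j) d, ← Real.rpow_mul (by linarith)]
          congr 1
          rw [htdef]
          field_simp
      _ ≤ (∏ i, (1 + |(j i : ℝ)|)) ^ (-t) :=
          Real.rpow_le_rpow_of_nonpos hpp hmain (by linarith)
      _ = ∏ i, (1 + |(j i : ℝ)|) ^ (-t) :=
          (Real.finset_prod_rpow _ _ (fun i _ => (h1 i).le) _).symm

lemma kernel_aux {a b c s : ℝ} (ha : 1 ≤ a) (hb : 1 ≤ b) (hc : 1 ≤ c)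
    (htri : c ≤ a + b) (hs0 : 0 ≤ s) :
    a ^ (-s) * b ^ (-s) ≤ 2 ^ s * c ^ (-s) * (a ^ (-s) + b ^ (-s)) := by
  have ha0 : (0:ℝ) < a ^ (-s) := Real.rpow_pos_of_pos (by linarith) _
  have hb0 : (0:ℝ) < b ^ (-s) := Real.rpow_pos_of_pos (by linarith) _
  have hc0 : (0:ℝ) < c ^ (-s) := Real.rpow_pos_of_pos (by linarith) _
  have h2s : (0:ℝ) < (2:ℝ) ^ s := Real.rpow_pos_of_pos two_pos _
  have half : ∀ x : ℝ, 1 ≤ x → c / 2 ≤ x → x ^ (-s) ≤ 2 ^ s * c ^ (-s) := by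
    intro x hx1 hcx
    calc x ^ (-s) ≤ (c / 2) ^ (-s) :=
          Real.rpow_le_rpow_of_nonpos (by linarith) hcx (neg_nonpos.mpr hs0)
      _ = 2 ^ s * c ^ (-s) := by
          rw [Real.div_rpow (by linarith) (by norm_num),
            Real.rpow_neg (by norm_num : (0:ℝ) ≤ 2)]
          field_simp
  rcases le_total a b with hab | hab
  · have h1 : b ^ (-s) ≤ 2 ^ s * c ^ (-s) := half b hb (by linarith)
    calc a ^ (-s) * b ^ (-s) ≤ a ^ (-s) * (2 ^ s * c ^ (-s)) :=
          mul_le_mul_of_nonneg_left h1 ha0.le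
      _ = 2 ^ s * c ^ (-s) * a ^ (-s) := by ring
      _ ≤ 2 ^ s * c ^ (-s) * (a ^ (-s) + b ^ (-s)) := by nlinarith
  · have h1 : a ^ (-s) ≤ 2 ^ s * c ^ (-s) := half a ha (by linarith)
    calc a ^ (-s) * b ^ (-s) ≤ (2 ^ s * c ^ (-s)) * b ^ (-s) :=
          mul_le_mul_of_nonneg_right h1 hb0.le
      _ = 2 ^ s * c ^ (-s) * b ^ (-s) := by ring
      _ ≤ 2 ^ s * c ^ (-s) * (a ^ (-s) + b ^ (-s)) := by nlinarith

-- STATEMENT 8: for s > d, the Jaffard class 𝒜_s over ℤ^d is a Banach algebra: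
-- there is a constant C_s (depending only on s and d) such that whenever
-- |A_{kl}| ≤ C_A (1+|k−l|)^{−s} and |B_{kl}| ≤ C_B (1+|k−l|)^{−s}, the product
-- matrix (AB)_{kl} = ∑_j A_{kj} B_{jl} satisfies
-- |(AB)_{kl}| ≤ C_s C_A C_B (1+|k−l|)^{−s}.
theorem jaffard_banach_algebra (d : ℕ) (s : ℝ) (hs : (d : ℝ) < s) :
    ∃ Cs : ℝ, 0 < Cs ∧
      ∀ (A B : (Fin d → ℤ) → (Fin d → ℤ) → ℂ) (CA CB : ℝ),
        0 ≤ CA → 0 ≤ CB →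
        (∀ k l, ‖A k l‖ ≤ CA * (1 + znorm (k - l)) ^ (-s)) →
        (∀ k l, ‖B k l‖ ≤ CB * (1 + znorm (k - l)) ^ (-s)) →
        ∀ k l, ‖∑' j, A k j * B j l‖ ≤ Cs * CA * CB * (1 + znorm (k - l)) ^ (-s) := by
  have hs0 : (0:ℝ) ≤ s := le_trans (Nat.cast_nonneg d) hs.le
  have hwpos : ∀ m : Fin d → ℤ, (0:ℝ) < (1 + znorm m) ^ (-s) := fun m =>
    Real.rpow_pos_of_pos (by have := znorm_nonneg m; linarith) _
  have hW : Summable (fun j : Fin d → ℤ => (1 + znorm j) ^ (-s)) := summable_weight d hs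
  set S := ∑' j : Fin d → ℤ, (1 + znorm j) ^ (-s) with hS
  have hS0 : 0 ≤ S := tsum_nonneg fun j => (hwpos j).le
  have h2s : (0:ℝ) < (2:ℝ) ^ s := Real.rpow_pos_of_pos two_pos s
  refine ⟨2 * 2 ^ s * (S + 1), by positivity, ?_⟩
  intro A B CA CB hCA hCB hA hB k l
  have ha : Summable (fun j => (1 + znorm (k - j)) ^ (-s)) :=
    (((Equiv.subLeft k).summable_iff (f := fun m => (1 + znorm m) ^ (-s))).2 hW).congr
      (fun j => rfl)
  have hb : Summable (fun j => (1 + znorm (j - l)) ^ (-s)) :=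
    (((Equiv.subRight l).summable_iff (f := fun m => (1 + znorm m) ^ (-s))).2 hW).congr
      (fun j => rfl)
  have hta : ∑' j, (1 + znorm (k - j)) ^ (-s) = S := by
    simpa using (Equiv.subLeft k).tsum_eq (fun m => (1 + znorm m) ^ (-s))
  have htb : ∑' j, (1 + znorm (j - l)) ^ (-s) = S := by
    simpa using (Equiv.subRight l).tsum_eq (fun m => (1 + znorm m) ^ (-s))
  have key : ∀ j, (1 + znorm (k - j)) ^ (-s) * (1 + znorm (j - l)) ^ (-s) ≤
      2 ^ s * (1 + znorm (k - l)) ^ (-s) *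
        ((1 + znorm (k - j)) ^ (-s) + (1 + znorm (j - l)) ^ (-s)) := by
    intro j
    apply kernel_aux
    · have := znorm_nonneg (k - j); linarith
    · have := znorm_nonneg (j - l); linarith
    · have := znorm_nonneg (k - l); linarith
    · have h1 := znorm_triangle k j l
      have h2 := znorm_nonneg (k - j)
      have h3 := znorm_nonneg (j - l)
      linarith
    · exact hs0
  have hbig : Summable (fun j => 2 ^ s * (1 + znorm (k - l)) ^ (-s) *
      ((1 + znorm (k - j)) ^ (-s) + (1 + znorm (j - l)) ^ (-s))) :=
    (ha.add hb).mul_left _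
  have hsum2 : Summable (fun j => (1 + znorm (k - j)) ^ (-s) * (1 + znorm (j - l)) ^ (-s)) :=
    Summable.of_nonneg_of_le (fun j => mul_nonneg (hwpos _).le (hwpos _).le) key hbig
  have hterm : ∀ j, ‖A k j * B j l‖ ≤
      CA * CB * ((1 + znorm (k - j)) ^ (-s) * (1 + znorm (j - l)) ^ (-s)) := by
    intro j
    rw [norm_mul]
    calc ‖A k j‖ * ‖B j l‖
        ≤ (CA * (1 + znorm (k - j)) ^ (-s)) * (CB * (1 + znorm (j - l)) ^ (-s)) :=
          mul_le_mul (hA k j) (hB j l) (norm_nonneg _) (mul_nonneg hCA (hwpos _).le)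
      _ = CA * CB * ((1 + znorm (k - j)) ^ (-s) * (1 + znorm (j - l)) ^ (-s)) := by ring
  have hsum1 : Summable (fun j => ‖A k j * B j l‖) :=
    Summable.of_nonneg_of_le (fun j => norm_nonneg _) hterm (hsum2.mul_left _)
  calc ‖∑' j, A k j * B j l‖ ≤ ∑' j, ‖A k j * B j l‖ := norm_tsum_le_tsum_norm hsum1
    _ ≤ ∑' j, CA * CB * ((1 + znorm (k - j)) ^ (-s) * (1 + znorm (j - l)) ^ (-s)) :=
        Summable.tsum_le_tsum hterm hsum1 (hsum2.mul_left _)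
    _ = CA * CB * ∑' j, ((1 + znorm (k - j)) ^ (-s) * (1 + znorm (j - l)) ^ (-s)) :=
        tsum_mul_left
    _ ≤ CA * CB * ∑' j, (2 ^ s * (1 + znorm (k - l)) ^ (-s) *
          ((1 + znorm (k - j)) ^ (-s) + (1 + znorm (j - l)) ^ (-s))) :=
        mul_le_mul_of_nonneg_left (Summable.tsum_le_tsum key hsum2 hbig) (mul_nonneg hCA hCB)
    _ = CA * CB * (2 ^ s * (1 + znorm (k - l)) ^ (-s) * (S + S)) := by
        rw [tsum_mul_left, Summable.tsum_add ha hb, hta, htb]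
    _ ≤ 2 * 2 ^ s * (S + 1) * CA * CB * (1 + znorm (k - l)) ^ (-s) := by
        have h4 : 0 ≤ CA * CB * (1 + znorm (k - l)) ^ (-s) * 2 ^ s :=
          mul_nonneg (mul_nonneg (mul_nonneg hCA hCB) (hwpos _).le) h2s.le
        nlinarith [h4]
end
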